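/- arXiv:1910.06830 — 5 statements merged into one kernel-verified Lean document; each statement's English description precedes it below -/
import Mathlib

section
/- Let C be a cyclic code of length n over R = F_q + uF_q, with canonical monic divisors g(x) and a(x) of x^n − 1 generating π(C) and Tor(C) respectively. If p(x) ∈ F_q[x] is any polynomial such that the image of g(x) + u·p(x) in R_n lies in C, then a(x) divides p(x)·((x^n − 1)/g(x)) in F_q[x]. -/
open Polynomial

noncomputable section

/-- The ambient ring `S[x]/(x^n - 1)`. -/
abbrev Amb (S : Type) [CommRing S] (n : ℕ) : Type := AdjoinRoot (X ^ n - 1 : S[X])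

/-- The image of a polynomial `f ∈ S[x]` in `S[x]/(x^n - 1)`. -/
def toAmb (S : Type) [CommRing S] (n : ℕ) (f : S[X]) : Amb S n := AdjoinRoot.mk _ f

lemma root_pow_sub_one (S : Type) [CommRing S] (n : ℕ) :
    (AdjoinRoot.root (X ^ n - 1 : S[X])) ^ n - 1 = 0 := by
  have h : (AdjoinRoot.mk (X ^ n - 1 : S[X])) (X ^ n - 1 : S[X]) = 0 := AdjoinRoot.mk_self
  simpa [map_sub, map_pow, AdjoinRoot.mk_X] using h

/-- The ring hom `S[x]/(x^n-1) → T[x]/(x^n-1)` induced by `φ : S →+* T`. -/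
def liftAmb {S T : Type} [CommRing S] [CommRing T] (n : ℕ) (φ : S →+* T) :
    Amb S n →+* Amb T n :=
  AdjoinRoot.lift ((AdjoinRoot.of _).comp φ) (AdjoinRoot.root _) (by
    have h := root_pow_sub_one T n
    simp [eval₂_sub, eval₂_pow, eval₂_one, eval₂_X, h])

/-- Reduction mod `u`: the homomorphism `π : R_n → F_q[x]/(x^n-1)` induced by
the projection `F_q + uF_q → F_q`. -/
def redMod (F : Type) [Field F] (n : ℕ) : Amb (DualNumber F) n →+* Amb F n :=
  liftAmb n (TrivSqZeroExt.fstHom F F F).toRingHom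

/-- The inclusion `F_q[x]/(x^n-1) → R_n` induced by `F_q ⊆ F_q + uF_q`. -/
def emb (F : Type) [Field F] (n : ℕ) : Amb F n →+* Amb (DualNumber F) n :=
  liftAmb n (algebraMap F (DualNumber F))

/-- The element `u` of `R_n = (F_q + uF_q)[x]/(x^n-1)`. -/
def uE (F : Type) [Field F] (n : ℕ) : Amb (DualNumber F) n :=
  AdjoinRoot.of _ (DualNumber.eps : DualNumber F)

/-- The torsion code `Tor(C) = {r ∈ F_q[x]/(x^n-1) : u·r ∈ C}` of a cyclic code
`C ⊆ R_n`. -/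
def Tor (F : Type) [Field F] (n : ℕ) (C : Ideal (Amb (DualNumber F) n)) : Set (Amb F n) :=
  {r | uE F n * emb F n r ∈ C}

/-- A set of codewords (identified with residue classes in `S[x]/(x^n-1)`) is
reversible if, for each codeword with coefficient vector `(c_0, …, c_{n-1})`
(i.e. each representative of degree `< n`), the reversed word `(c_{n-1}, …, c_0)`
is again a codeword.  Here `Polynomial.reflect (n-1)` realizes the reversal of
the coefficient vector of a polynomial of degree `< n`. -/
def ReversibleCode (S : Type) [CommRing S] (n : ℕ) (D : Set (Amb S n)) : Prop :=
  ∀ f : S[X], f.degree < (n : ℕ) → toAmb S n f ∈ D →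
    toAmb S n (f.reflect (n - 1)) ∈ D

/-- The Euclidean dual code of a code `C ⊆ S[x]/(x^n-1)`: all residue classes whose
coefficient vector (of the degree `< n` representative) is orthogonal to the
coefficient vector of every codeword of `C`. -/
def dualCode (S : Type) [CommRing S] (n : ℕ) (C : Set (Amb S n)) : Set (Amb S n) :=
  {w | ∀ wp : S[X], wp.degree < (n : ℕ) → toAmb S n wp = w →
    ∀ cp : S[X], cp.degree < (n : ℕ) → toAmb S n cp ∈ C →
      ∑ i ∈ Finset.range n, wp.coeff i * cp.coeff i = 0}

/-- The minimum Hamming distance of a code `C ⊆ S[x]/(x^n-1)`: the least Hamming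
weight of (the coefficient vector of) a nonzero codeword. -/
def dH (S : Type) [CommRing S] (n : ℕ) (C : Set (Amb S n)) : ℕ :=
  sInf {d | ∃ cp : S[X], cp.degree < (n : ℕ) ∧ cp ≠ 0 ∧ toAmb S n cp ∈ C ∧
    cp.support.card = d}

end

/-- if `g(x) + u·p(x) ∈ C`, then `a(x) ∣ p(x)·((x^n-1)/g(x))`. -/
theorem stmt1 {F : Type} [Field F] [Fintype F] {n : ℕ} (hn : 0 < n)
    (C : Ideal (Amb (DualNumber F) n)) (g a : F[X])
    (hgm : g.Monic) (ham : a.Monic)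
    (hgdvd : g ∣ X ^ n - 1) (hadvd : a ∣ X ^ n - 1)
    (hgC : Ideal.map (redMod F n) C = Ideal.span {toAmb F n g})
    (haC : Tor F n C = ↑(Ideal.span {toAmb F n a}))
    (p : F[X])
    (hpC : emb F n (toAmb F n g) + uE F n * emb F n (toAmb F n p) ∈ C) :
    a ∣ p * ((X ^ n - 1) / g) := by
  set h : F[X] := (X ^ n - 1) / g with hh
  have hgh : g * h = X ^ n - 1 := EuclideanDomain.mul_div_cancel' hgm.ne_zero hgdvd
  -- multiply the codeword by emb (toAmb h)
  have hmem : (emb F n (toAmb F n g) + uE F n * emb F n (toAmb F n p)) *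
      emb F n (toAmb F n h) ∈ C := C.mul_mem_right _ hpC
  have hzero : toAmb F n g * toAmb F n h = 0 := by
    have : toAmb F n (g * h) = 0 := by
      rw [hgh]
      exact AdjoinRoot.mk_self
    simpa [toAmb, map_mul] using this
  have hkey : uE F n * emb F n (toAmb F n (p * h)) ∈ C := by
    have heq : (emb F n (toAmb F n g) + uE F n * emb F n (toAmb F n p)) *
        emb F n (toAmb F n h) = uE F n * emb F n (toAmb F n (p * h)) := by
      have h1 : emb F n (toAmb F n g) * emb F n (toAmb F n h) = 0 := by
        rw [← map_mul, hzero, map_zero]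
      have h2 : toAmb F n (p * h) = toAmb F n p * toAmb F n h := by
        simp [toAmb, map_mul]
      rw [h2, map_mul, add_mul, h1, zero_add, mul_assoc]
    rwa [heq] at hmem
  have htor : toAmb F n (p * h) ∈ Tor F n C := hkey
  rw [haC] at htor
  rw [SetLike.mem_coe, Ideal.mem_span_singleton] at htor
  obtain ⟨c, hc⟩ := htor
  obtain ⟨c', rfl⟩ := AdjoinRoot.mk_surjective c
  have : toAmb F n (p * h) = toAmb F n (a * c') := by
    rw [hc]; simp [toAmb, map_mul]
  have hdvd : (X ^ n - 1 : F[X]) ∣ p * h - a * c' := (AdjoinRoot.mk_eq_mk).1 this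
  have : a ∣ p * h - a * c' := hadvd.trans hdvd
  have : a ∣ (p * h - a * c') + a * c' := dvd_add this (Dvd.intro c' rfl)
  simpa using this
end

section
/- Every cyclic code C of length n over R = F_q + uF_q can be written as C = ⟨g(x) + u·p(x), u·a(x)⟩, i.e. C is the ideal of R_n generated by the images of g(x) + u·p(x) and u·a(x), for some polynomial p(x) ∈ F_q[x] with deg p(x) < deg a(x), where g(x) and a(x) are the canonical monic divisors of x^n − 1 generating π(C) and Tor(C) respectively. -/
open Polynomial

section Helpers
variable {F : Type} [Field F] {n : ℕ}

lemma liftAmb_mk {S T : Type} [CommRing S] [CommRing T] (n : ℕ) (φ : S →+* T) (f : S[X]) :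
    liftAmb n φ (AdjoinRoot.mk _ f) = AdjoinRoot.mk _ (f.map φ) := by
  rw [liftAmb, AdjoinRoot.lift_mk, ← AdjoinRoot.aeval_eq, aeval_def, eval₂_map,
    AdjoinRoot.algebraMap_eq]


lemma redMod_emb (x : Amb F n) : redMod F n (emb F n x) = x := by
  obtain ⟨f, rfl⟩ := AdjoinRoot.mk_surjective x
  rw [emb, redMod, liftAmb_mk, liftAmb_mk, Polynomial.map_map]
  have : (TrivSqZeroExt.fstHom F F F).toRingHom.comp (algebraMap F (DualNumber F)) = RingHom.id F := by
    ext x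
    rfl
  rw [this, Polynomial.map_id]

lemma redMod_uE : redMod F n (uE F n) = 0 := by
  have : (uE F n : Amb (DualNumber F) n) = AdjoinRoot.mk _ (Polynomial.C (DualNumber.eps : DualNumber F)) := rfl
  rw [this, redMod, liftAmb_mk]
  rw [Polynomial.map_C]
  have : (TrivSqZeroExt.fstHom F F F).toRingHom (DualNumber.eps) = 0 := by
    exact TrivSqZeroExt.fst_inr F 1
  rw [this, map_zero, map_zero]

lemma uE_sq : uE F n * uE F n = 0 := by
  rw [uE, ← map_mul, DualNumber.eps_mul_eps, map_zero]

lemma dual_coeff_decomp (c : DualNumber F) :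
    algebraMap F (DualNumber F) c.fst + DualNumber.eps * algebraMap F (DualNumber F) c.snd = c := by
  show _ + TrivSqZeroExt.inr (1:F) * _ = c
  simp only [TrivSqZeroExt.algebraMap_eq_inl]
  rw [TrivSqZeroExt.inr_mul_inl]
  simpa using TrivSqZeroExt.inl_fst_add_inr_snd_eq c

lemma poly_decomp (f : (DualNumber F)[X]) :
    f = ((f.map (TrivSqZeroExt.fstHom F F F).toRingHom).map (algebraMap F (DualNumber F)))
      + Polynomial.C DualNumber.eps *
        ((∑ i ∈ f.support, Polynomial.monomial i ((f.coeff i).snd)).map (algebraMap F (DualNumber F))) := by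
  set r : F[X] := ∑ i ∈ f.support, Polynomial.monomial i ((f.coeff i).snd) with hrdef
  have hr : ∀ i, r.coeff i = (f.coeff i).snd := by
    intro i
    rw [hrdef, Polynomial.finset_sum_coeff]
    simp only [Polynomial.coeff_monomial]
    rw [Finset.sum_ite_eq' f.support i (fun j => (f.coeff j).snd)]
    by_cases h : i ∈ f.support
    · simp [h]
    · simp only [h, if_false]
      rw [Polynomial.notMem_support_iff.mp h]
      rfl
  refine Polynomial.ext fun i => ?_
  rw [Polynomial.coeff_add, Polynomial.coeff_map, Polynomial.coeff_map, Polynomial.coeff_C_mul,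
    Polynomial.coeff_map, hr]
  exact (dual_coeff_decomp (f.coeff i)).symm

lemma mem_ker_redMod {c : Amb (DualNumber F) n} (h : redMod F n c = 0) :
    ∃ w : Amb F n, c = uE F n * emb F n w := by
  obtain ⟨f, rfl⟩ := AdjoinRoot.mk_surjective c
  rw [redMod, liftAmb_mk] at h
  have hdvd : (X ^ n - 1 : (DualNumber F)[X]) ∣
      (f.map (TrivSqZeroExt.fstHom F F F).toRingHom).map (algebraMap F (DualNumber F)) := by
    have h2 := Polynomial.map_dvd (algebraMap F (DualNumber F)) (AdjoinRoot.mk_eq_zero.mp h)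
    simpa [Polynomial.map_sub, Polynomial.map_pow] using h2
  refine ⟨AdjoinRoot.mk _ (∑ i ∈ f.support, Polynomial.monomial i ((f.coeff i).snd)), ?_⟩
  conv_lhs => rw [poly_decomp f]
  rw [map_add, AdjoinRoot.mk_eq_zero.mpr hdvd, zero_add, map_mul, emb, liftAmb_mk]
  rfl

lemma redMod_surj : Function.Surjective (redMod F n) :=
  fun x => ⟨emb F n x, redMod_emb x⟩

end Helpers

/-- every cyclic code over `R` is `⟨g(x) + u·p(x), u·a(x)⟩` for
some `p(x)` with `deg p < deg a`. -/
theorem stmt2 {F : Type} [Field F] [Fintype F] {n : ℕ} (hn : 0 < n)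
    (C : Ideal (Amb (DualNumber F) n)) (g a : F[X])
    (hgm : g.Monic) (ham : a.Monic)
    (hgdvd : g ∣ X ^ n - 1) (hadvd : a ∣ X ^ n - 1)
    (hgC : Ideal.map (redMod F n) C = Ideal.span {toAmb F n g})
    (haC : Tor F n C = ↑(Ideal.span {toAmb F n a})) :
    ∃ p : F[X], p.degree < a.degree ∧
      C = Ideal.span {emb F n (toAmb F n g) + uE F n * emb F n (toAmb F n p),
        uE F n * emb F n (toAmb F n a)} := by
  classical
  have hgmem : toAmb F n g ∈ Ideal.map (redMod F n) C := by
    rw [hgC]; exact Ideal.mem_span_singleton_self _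
  obtain ⟨c₀, hc₀C, hc₀⟩ := (Ideal.mem_map_iff_of_surjective _ redMod_surj).mp hgmem
  have hker : redMod F n (c₀ - emb F n (toAmb F n g)) = 0 := by
    rw [map_sub, hc₀, redMod_emb, sub_self]
  obtain ⟨w, hw⟩ := mem_ker_redMod hker
  obtain ⟨p₀, rfl⟩ := AdjoinRoot.mk_surjective w
  have hc₀eq : c₀ = emb F n (toAmb F n g) + uE F n * emb F n (AdjoinRoot.mk _ p₀) := by
    rw [← hw]; ring
  refine ⟨p₀ %ₘ a, Polynomial.degree_modByMonic_lt p₀ ham, ?_⟩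
  set p : F[X] := p₀ %ₘ a with hpdef
  set q : F[X] := p₀ /ₘ a with hqdef
  have hp₀ : p + a * q = p₀ := Polynomial.modByMonic_add_div p₀ a
  set G : Amb (DualNumber F) n := emb F n (toAmb F n g) + uE F n * emb F n (toAmb F n p)
    with hGdef
  set A : Amb (DualNumber F) n := uE F n * emb F n (toAmb F n a) with hAdef
  have hAC : A ∈ C := by
    have h1 : toAmb F n a ∈ Tor F n C := by
      rw [haC]; exact Ideal.mem_span_singleton_self _
    exact h1
  have hmkp₀ : (AdjoinRoot.mk (X ^ n - 1 : F[X]) p₀)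
      = toAmb F n p + toAmb F n a * AdjoinRoot.mk _ q := by
    rw [toAmb, toAmb, ← map_mul, ← map_add, hp₀]
  have hGeq : G = c₀ - A * emb F n (AdjoinRoot.mk _ q) := by
    rw [hc₀eq, hmkp₀, map_add, map_mul, hGdef, hAdef]
    ring
  have hGC : G ∈ C := by
    rw [hGeq]; exact Ideal.sub_mem _ hc₀C (Ideal.mul_mem_right _ _ hAC)
  refine le_antisymm ?_ ?_
  · intro c hcC
    have hmem : redMod F n c ∈ Ideal.span {toAmb F n g} := by
      rw [← hgC]; exact Ideal.mem_map_of_mem _ hcC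
    obtain ⟨m, hm⟩ := Ideal.mem_span_singleton.mp hmem
    have hG : redMod F n G = toAmb F n g := by
      rw [hGdef, map_add, map_mul, redMod_uE, zero_mul, add_zero, redMod_emb]
    have hker2 : redMod F n (c - G * emb F n m) = 0 := by
      rw [map_sub, map_mul, hG, redMod_emb, hm, sub_self]
    obtain ⟨w2, hw2⟩ := mem_ker_redMod hker2
    have hw2C : uE F n * emb F n w2 ∈ C := by
      rw [← hw2]; exact Ideal.sub_mem _ hcC (Ideal.mul_mem_right _ _ hGC)
    have htor : w2 ∈ Tor F n C := hw2C
    rw [haC] at htor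
    obtain ⟨s, hs⟩ := Ideal.mem_span_singleton.mp htor
    have hcs : c = G * emb F n m + A * emb F n s := by
      have h3 : c - G * emb F n m = A * emb F n s := by
        rw [hw2, hs, map_mul, hAdef]; ring
      linear_combination h3
    rw [hcs]
    refine Ideal.add_mem _ (Ideal.mul_mem_right _ _ ?_) (Ideal.mul_mem_right _ _ ?_)
    · exact Ideal.subset_span (Set.mem_insert _ _)
    · exact Ideal.subset_span (Set.mem_insert_of_mem _ rfl)
  · rw [Ideal.span_le]
    rintro x hx
    rcases hx with rfl | hx
    · exact hGC
    · rcases hx with rfl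
      exact hAC
end

section
/- Let C be a reversible cyclic code of length n over R = F_q + uF_q, with canonical monic divisors g(x) and a(x) of x^n − 1 generating π(C) and Tor(C) respectively. Then both ⟨g(x)⟩ = π(C) and ⟨a(x)⟩ = Tor(C) are reversible cyclic codes of length n over F_q. -/
open Polynomial

noncomputable section AuxStmt7

lemma liftAmb_toAmb {S T : Type} [CommRing S] [CommRing T] (n : ℕ) (φ : S →+* T) (f : S[X]) :
    liftAmb n φ (toAmb S n f) = toAmb T n (f.map φ) := by
  unfold liftAmb toAmb
  rw [AdjoinRoot.lift_mk]
  rw [show ((AdjoinRoot.of (X ^ n - 1 : T[X])).comp φ) = (algebraMap T _).comp φ from rfl]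
  rw [← Polynomial.eval₂_map, ← Polynomial.aeval_def, AdjoinRoot.aeval_eq]

lemma toAmb_eq_of_lt {S : Type} [CommRing S] [Nontrivial S] (n : ℕ) (hn : 0 < n) {f g : S[X]}
    (hf : f.degree < (n : ℕ)) (hg : g.degree < (n : ℕ))
    (h : toAmb S n f = toAmb S n g) : f = g := by
  have hdvd : (X ^ n - 1 : S[X]) ∣ f - g := by
    rwa [toAmb, toAmb, AdjoinRoot.mk_eq_mk] at h
  have hdeg : ((X : S[X]) ^ n - 1).degree = (n : ℕ) := by
    simpa using Polynomial.degree_X_pow_sub_C hn (1 : S)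
  have hm : (X ^ n - 1 : S[X]).Monic := by
    simpa using Polynomial.monic_X_pow_sub_C (1 : S) hn.ne'
  obtain ⟨c, hc⟩ := hdvd
  rcases eq_or_ne c 0 with h0 | h0
  · rw [h0, mul_zero] at hc
    exact sub_eq_zero.mp hc
  · exfalso
    have hdm : ((X ^ n - 1 : S[X]) * c).degree = c.degree + (n : ℕ) := by
      rw [mul_comm, hm.degree_mul, hdeg]
    have hge : (n : ℕ) ≤ (f - g).degree := by
      rw [hc, hdm]
      have h0' : (0 : WithBot ℕ) ≤ c.degree := Polynomial.zero_le_degree_iff.mpr h0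
      calc ((n : ℕ) : WithBot ℕ) = 0 + (n : ℕ) := by rw [zero_add]
        _ ≤ c.degree + (n : ℕ) := add_le_add h0' le_rfl
    exact absurd (lt_of_le_of_lt hge (lt_of_le_of_lt (Polynomial.degree_sub_le f g)
      (max_lt hf hg))) (lt_irrefl _)

lemma exists_rep_lt {S : Type} [CommRing S] [Nontrivial S] (n : ℕ) (hn : 0 < n)
    (z : Amb S n) : ∃ p : S[X], p.degree < (n : ℕ) ∧ toAmb S n p = z := by
  obtain ⟨q, rfl⟩ := AdjoinRoot.mk_surjective z
  have hm : (X ^ n - 1 : S[X]).Monic := by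
    have := Polynomial.monic_X_pow_sub_C (1 : S) hn.ne'
    simpa using this
  refine ⟨q %ₘ (X ^ n - 1), ?_, ?_⟩
  · have hdeg : ((X : S[X]) ^ n - 1).degree = (n : ℕ) := by
      simpa using Polynomial.degree_X_pow_sub_C hn (1 : S)
    simpa [hdeg] using Polynomial.degree_modByMonic_lt q hm
  · unfold toAmb
    rw [AdjoinRoot.mk_eq_mk]
    have := Polynomial.modByMonic_add_div q (X ^ n - 1 : S[X])
    exact ⟨-(q /ₘ (X ^ n - 1)), by linear_combination this⟩

end AuxStmt7

/-- if `C` is reversible then both `π(C) = ⟨g(x)⟩` and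
`Tor(C) = ⟨a(x)⟩` are reversible cyclic codes over `F_q`. -/
theorem stmt7 {F : Type} [Field F] [Fintype F] {n : ℕ} (hn : 0 < n)
    (C : Ideal (Amb (DualNumber F) n)) (g a : F[X])
    (hgm : g.Monic) (ham : a.Monic)
    (hgdvd : g ∣ X ^ n - 1) (hadvd : a ∣ X ^ n - 1)
    (hgC : Ideal.map (redMod F n) C = Ideal.span {toAmb F n g})
    (haC : Tor F n C = ↑(Ideal.span {toAmb F n a}))
    (hrev : ReversibleCode (DualNumber F) n ↑C) :
    ReversibleCode F n ↑(Ideal.span {toAmb F n g}) ∧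
    ReversibleCode F n ↑(Ideal.span {toAmb F n a}) := by
  have hcomp : (TrivSqZeroExt.fstHom F F F).toRingHom.comp (algebraMap F (DualNumber F))
      = RingHom.id F := by
    ext x
    simp [TrivSqZeroExt.algebraMap_eq_inl']
  have hred : ∀ p : (DualNumber F)[X],
      redMod F n (toAmb (DualNumber F) n p) = toAmb F n (p.map (TrivSqZeroExt.fstHom F F F).toRingHom) := by
    intro p; exact liftAmb_toAmb n _ p
  have hemb : ∀ p : F[X],
      emb F n (toAmb F n p) = toAmb (DualNumber F) n (p.map (algebraMap F (DualNumber F))) := by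
    intro p; exact liftAmb_toAmb n _ p
  have huE : ∀ p : (DualNumber F)[X],
      uE F n * toAmb (DualNumber F) n p = toAmb (DualNumber F) n (Polynomial.C DualNumber.eps * p) := by
    intro p
    rw [uE, toAmb, toAmb, map_mul]
    rfl
  have hsurj : Function.Surjective (redMod F n) := by
    intro z
    obtain ⟨p, rfl⟩ := AdjoinRoot.mk_surjective z
    refine ⟨toAmb (DualNumber F) n (p.map (algebraMap F (DualNumber F))), ?_⟩
    rw [hred, Polynomial.map_map, hcomp, Polynomial.map_id]
    rfl
  constructor
  · -- π(C) = ⟨g⟩ is reversible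
    rw [← hgC]
    intro f hf hfC
    rw [SetLike.mem_coe, Ideal.mem_map_iff_of_surjective _ hsurj] at hfC
    obtain ⟨w, hwC, hw⟩ := hfC
    obtain ⟨wp, hwpdeg, rfl⟩ := exists_rep_lt (S := DualNumber F) n hn w
    have hfw : f = wp.map (TrivSqZeroExt.fstHom F F F).toRingHom := by
      apply toAmb_eq_of_lt n hn hf
      · exact lt_of_le_of_lt (Polynomial.degree_map_le) hwpdeg
      · rw [← hred, hw]
    have hwrev := hrev wp hwpdeg hwC
    rw [SetLike.mem_coe, Ideal.mem_map_iff_of_surjective _ hsurj]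
    refine ⟨toAmb (DualNumber F) n (wp.reflect (n - 1)), hwrev, ?_⟩
    rw [hred, ← Polynomial.reflect_map, ← hfw]
  · -- Tor(C) = ⟨a⟩ is reversible
    rw [← haC]
    intro f hf hfT
    have hfT' : uE F n * emb F n (toAmb F n f) ∈ C := hfT
    rw [hemb, huE] at hfT'
    set w : (DualNumber F)[X] := Polynomial.C DualNumber.eps * (f.map (algebraMap F (DualNumber F))) with hwdef
    have hwdeg : w.degree < (n : ℕ) := by
      refine lt_of_le_of_lt ?_ hf
      calc w.degree ≤ (Polynomial.C (DualNumber.eps (R := F))).degree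
            + (f.map (algebraMap F (DualNumber F))).degree := Polynomial.degree_mul_le _ _
        _ ≤ 0 + f.degree := add_le_add (Polynomial.degree_C_le) (Polynomial.degree_map_le)
        _ = f.degree := zero_add _
    have hwrev := hrev w hwdeg hfT'
    show uE F n * emb F n (toAmb F n (f.reflect (n - 1))) ∈ C
    rw [hemb, huE, ← Polynomial.reflect_map, ← Polynomial.reflect_C_mul]
    exact hwrev
end

section
/- Let n be odd and let C be the cyclic code of length n over R = Z_2 + uZ_2 given by C = ⟨g(x), u·a(x)⟩, where a(x), g(x) ∈ Z_2[x] with a(x) | g(x) | (x^n − 1). Then the dual code satisfies C⊥ = ⟨((x^n − 1)/a(x))*, u·((x^n − 1)/g(x))*⟩ as ideals of R_n. -/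
open Polynomial

namespace Stmt13Aux

open Polynomial AdjoinRoot

noncomputable section

variable {S : Type} [CommRing S] {n : ℕ}

local notation "x" => (AdjoinRoot.root (X ^ n - 1 : S[X]))

lemma root_pow_n : (AdjoinRoot.root (X ^ n - 1 : S[X])) ^ n = 1 :=
  sub_eq_zero.mp (root_pow_sub_one S n)

lemma pow_reduce (i r : ℕ) :
    (AdjoinRoot.root (X ^ n - 1 : S[X])) ^ (n * i + r) = x ^ r := by
  rw [pow_add, pow_mul, root_pow_n, one_pow, one_mul]

lemma hmon (hn : 0 < n) : (X ^ n - 1 : S[X]).Monic := by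
  simpa using monic_X_pow_sub_C (1 : S) hn.ne'

lemma deg_xn [Nontrivial S] (hn : 0 < n) : (X ^ n - 1 : S[X]).degree = n := by
  simpa using degree_X_pow_sub_C hn (1 : S)

lemma ndeg_xn [Nontrivial S] (hn : 0 < n) : (X ^ n - 1 : S[X]).natDegree = n := by
  simpa using natDegree_X_pow_sub_C (n := n) (r := (1 : S))

lemma toAmb_eq_zero {p : S[X]} : toAmb S n p = 0 ↔ (X ^ n - 1 : S[X]) ∣ p :=
  AdjoinRoot.mk_eq_zero

lemma exists_rep [Nontrivial S] (hn : 0 < n) (v : Amb S n) :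
    ∃ p : S[X], p.degree < (n : ℕ) ∧ toAmb S n p = v := by
  obtain ⟨q, rfl⟩ := AdjoinRoot.mk_surjective v
  refine ⟨q %ₘ (X ^ n - 1), ?_, ?_⟩
  · have := degree_modByMonic_lt q (hmon (S := S) hn)
    rwa [deg_xn hn] at this
  · have hdvd : (X ^ n - 1 : S[X]) ∣ q - q %ₘ (X ^ n - 1) := by
      simpa [modByMonic_eq_sub_mul_div q (X ^ n - 1 : S[X])] using
        (Dvd.intro _ rfl : (X ^ n - 1 : S[X]) ∣ (X ^ n - 1) * (q /ₘ (X ^ n - 1)))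
    have : toAmb S n (q - q %ₘ (X ^ n - 1)) = 0 := toAmb_eq_zero.mpr hdvd
    unfold toAmb at this ⊢
    rw [map_sub, sub_eq_zero] at this
    exact this.symm

lemma ndeg_le {p : S[X]} (h : p.degree < (n : ℕ)) : p.natDegree ≤ n - 1 := by
  rcases eq_or_ne p 0 with rfl | hp
  · simp
  · have h0 : 0 < n := by
      by_contra h0
      interval_cases n
      simp [Nat.cast_zero, Nat.lt_irrefl] at h
      exact hp (degree_eq_bot.mp (by simpa using h))
    have := (natDegree_lt_iff_degree_lt hp).mpr h
    omega

lemma dot_eq_coeff (hn : 0 < n) (wp cp : S[X]) :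
    ∑ i ∈ Finset.range n, wp.coeff i * cp.coeff i
      = (wp * reflect (n - 1) cp).coeff (n - 1) := by
  rw [coeff_mul, Finset.Nat.sum_antidiagonal_eq_sum_range_succ_mk]
  have h1 : (n - 1).succ = n := by omega
  rw [h1]
  refine Finset.sum_congr rfl fun k hk => ?_
  have hk' : k ≤ n - 1 := by have := Finset.mem_range.mp hk; omega
  rw [coeff_reflect, revAt_le (by omega : n - 1 - k ≤ n - 1)]
  congr 2
  omega

/-- P3 : a multiple of `X^n - 1` of degree `≤ 2(n-1)` has vanishing coeff `n-1`. -/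
lemma coeff_nsub1_eq_zero [Nontrivial S] (hn : 0 < n) {m : S[X]} (hdeg : m.natDegree ≤ 2 * (n - 1))
    (h : toAmb S n m = 0) : m.coeff (n - 1) = 0 := by
  obtain ⟨q, rfl⟩ := toAmb_eq_zero.mp h
  rcases eq_or_ne q 0 with rfl | hq
  · simp
  · have hdq : ((X ^ n - 1 : S[X]) * q).natDegree = n + q.natDegree := by
      rw [(hmon (S := S) hn).natDegree_mul' hq, ndeg_xn hn]
    have hqd : q.natDegree < n - 1 := by omega
    have h2 : ((X ^ n - 1 : S[X]) * q).coeff (n - 1)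
        = (X ^ n * q).coeff (n - 1) - q.coeff (n - 1) := by
      rw [sub_mul, one_mul, coeff_sub]
    rw [h2, coeff_X_pow_mul']
    rw [if_neg (by omega), coeff_eq_zero_of_natDegree_lt hqd, zero_sub, neg_zero]

lemma coeff_nsub1_congr [Nontrivial S] (hn : 0 < n) {m₁ m₂ : S[X]} (h1 : m₁.natDegree ≤ 2 * (n - 1))
    (h2 : m₂.natDegree ≤ 2 * (n - 1)) (h : toAmb S n m₁ = toAmb S n m₂) :
    m₁.coeff (n - 1) = m₂.coeff (n - 1) := by
  have hd : (m₁ - m₂).natDegree ≤ 2 * (n - 1) :=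
    le_trans (natDegree_sub_le _ _) (by omega)
  have hz : toAmb S n (m₁ - m₂) = 0 := by
    unfold toAmb at h ⊢; rw [map_sub, sub_eq_zero]; exact h
  have := coeff_nsub1_eq_zero hn hd hz
  rw [coeff_sub, sub_eq_zero] at this
  exact this

end
end Stmt13Aux
namespace Stmt13Aux
open Polynomial AdjoinRoot
noncomputable section

variable {S : Type} [CommRing S] {n : ℕ}

local notation "x" => (AdjoinRoot.root (X ^ n - 1 : S[X]))

/-- The automorphism `x ↦ x^{n-1} = x^{-1}` of `S[x]/(x^n-1)`. -/
def rho (S : Type) [CommRing S] (n : ℕ) : Amb S n →+* Amb S n :=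
  AdjoinRoot.lift (AdjoinRoot.of _) (AdjoinRoot.root _ ^ (n - 1)) (by
    rw [eval₂_sub, eval₂_pow, eval₂_one, eval₂_X, ← pow_mul, mul_comm, pow_mul,
      root_pow_n, one_pow, sub_self])

lemma rho_mk (p : S[X]) :
    rho S n (toAmb S n p) = eval₂ (AdjoinRoot.of _) (x ^ (n - 1)) p :=
  AdjoinRoot.lift_mk _ _

lemma rho_of (s : S) : rho S n (AdjoinRoot.of _ s) = AdjoinRoot.of _ s :=
  AdjoinRoot.lift_of _

lemma rho_root : rho S n x = x ^ (n - 1) :=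
  AdjoinRoot.lift_root _

lemma toAmb_monomial (i : ℕ) (c : S) :
    toAmb S n (Polynomial.monomial i c) = AdjoinRoot.of _ c * x ^ i := by
  rw [← C_mul_X_pow_eq_monomial]
  unfold toAmb
  rw [map_mul, map_pow, AdjoinRoot.mk_X, AdjoinRoot.mk_C]

lemma toAmb_as_sum {p : S[X]} {N : ℕ} (h : p.natDegree ≤ N) :
    toAmb S n p = ∑ i ∈ Finset.range (N + 1), AdjoinRoot.of _ (p.coeff i) * x ^ i := by
  conv_lhs => rw [p.as_sum_range' (N + 1) (by omega)]
  unfold toAmb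
  rw [map_sum]
  exact Finset.sum_congr rfl fun i _ => toAmb_monomial i _

lemma rho_as_sum {p : S[X]} {N : ℕ} (h : p.natDegree ≤ N) :
    rho S n (toAmb S n p)
      = ∑ i ∈ Finset.range (N + 1), AdjoinRoot.of _ (p.coeff i) * x ^ ((n - 1) * i) := by
  rw [rho_mk]
  conv_lhs => rw [p.as_sum_range' (N + 1) (by omega)]
  rw [eval₂_finset_sum]
  exact Finset.sum_congr rfl fun i _ => by rw [eval₂_monomial, ← pow_mul]

lemma reflect_sum {α : Type} (s : Finset α) (f : α → S[X]) (N : ℕ) :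
    reflect N (∑ i ∈ s, f i) = ∑ i ∈ s, reflect N (f i) := by
  induction s using Finset.cons_induction with
  | empty => simp [reflect_zero]
  | cons a s ha ih => rw [Finset.sum_cons, Finset.sum_cons, reflect_add, ih]

lemma toAmb_reflect_as_sum {p : S[X]} {N : ℕ} (h : p.natDegree ≤ N) :
    toAmb S n (reflect N p)
      = ∑ i ∈ Finset.range (N + 1), AdjoinRoot.of _ (p.coeff i) * x ^ (N - i) := by
  conv_lhs => rw [p.as_sum_range' (N + 1) (by omega)]
  rw [reflect_sum]
  unfold toAmb
  rw [map_sum]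
  refine Finset.sum_congr rfl fun i hi => ?_
  have hi' : i ≤ N := by have := Finset.mem_range.mp hi; omega
  rw [← C_mul_X_pow_eq_monomial, reflect_C_mul_X_pow, revAt_le hi',
    map_mul, map_pow, AdjoinRoot.mk_X, AdjoinRoot.mk_C]

/-- P5: for a representative of degree `< n`, reflection corresponds to
`x^{n-1} · ρ`. -/
lemma toAmb_reflect (hn : 0 < n) {p : S[X]} (h : p.natDegree ≤ n - 1) :
    toAmb S n (reflect (n - 1) p) = x ^ (n - 1) * rho S n (toAmb S n p) := by
  rw [toAmb_reflect_as_sum h, rho_as_sum h, Finset.mul_sum]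
  refine Finset.sum_congr rfl fun i hi => ?_
  have hi' : i ≤ n - 1 := by have := Finset.mem_range.mp hi; omega
  rw [mul_left_comm]
  congr 1
  rw [← pow_add]
  have harith : n - 1 + (n - 1) * i = n * i + (n - 1 - i) := by
    have h2 : (n - 1) * i = n * i - i := by rw [Nat.sub_one_mul]
    have h3 : i ≤ n * i := Nat.le_mul_of_pos_left i hn
    omega
  rw [harith, pow_reduce]

/-- P6: `x^{deg f} · ρ(f) = reverse f` in the ambient ring. -/
lemma toAmb_reverse (hn : 0 < n) (p : S[X]) :
    x ^ p.natDegree * rho S n (toAmb S n p) = toAmb S n p.reverse := by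
  rw [Polynomial.reverse, toAmb_reflect_as_sum (le_refl _),
    rho_as_sum (le_refl _), Finset.mul_sum]
  refine Finset.sum_congr rfl fun i hi => ?_
  have hi' : i ≤ p.natDegree := by have := Finset.mem_range.mp hi; omega
  rw [mul_left_comm]
  congr 1
  rw [← pow_add]
  have harith : p.natDegree + (n - 1) * i = n * i + (p.natDegree - i) := by
    have h2 : (n - 1) * i = n * i - i := by rw [Nat.sub_one_mul]
    have h3 : i ≤ n * i := Nat.le_mul_of_pos_left i hn
    omega
  rw [harith, pow_reduce]

end
end Stmt13Aux
namespace Stmt13Aux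
open Polynomial AdjoinRoot
noncomputable section

variable {S : Type} [CommRing S] {n : ℕ}

local notation "x" => (AdjoinRoot.root (X ^ n - 1 : S[X]))

/-- P4: if all "coefficients" (extracted via dot products) of `v` vanish, `v = 0`. -/
lemma eq_zero_of_coeffs [Nontrivial S] (hn : 0 < n) (v : Amb S n)
    (h : ∀ k : ℕ, ∃ m : S[X], m.natDegree ≤ 2 * (n - 1) ∧
        toAmb S n m = v * x ^ ((n - 1) * k) ∧ m.coeff (n - 1) = 0) :
    v = 0 := by
  obtain ⟨r, hrdeg, hr⟩ := exists_rep hn v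
  have hrn : r.natDegree ≤ n - 1 := ndeg_le hrdeg
  have hcoeff : ∀ j, j < n → r.coeff j = 0 := by
    intro j hj
    obtain ⟨m, hm1, hm2, hm3⟩ := h (j + 1)
    have harith : (n - 1) * (j + 1) = n * j + (n - 1 - j) := by
      have h2 : (n - 1) * (j + 1) = n * (j + 1) - (j + 1) := by rw [Nat.sub_one_mul]
      have h3 : n * (j + 1) = n * j + n := by rw [Nat.mul_succ]
      omega
    have hx : v * x ^ ((n - 1) * (j + 1)) = v * x ^ (n - 1 - j) := by
      rw [harith, pow_reduce]
    have hm' : toAmb S n (r * X ^ (n - 1 - j)) = v * x ^ ((n - 1) * (j + 1)) := by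
      unfold toAmb
      rw [map_mul, map_pow, AdjoinRoot.mk_X, hx, ← hr]
      rfl
    have hdm' : (r * X ^ (n - 1 - j)).natDegree ≤ 2 * (n - 1) := by
      refine le_trans (natDegree_mul_le) ?_
      have := natDegree_X_pow_le (R := S) (n - 1 - j)
      omega
    have := coeff_nsub1_congr hn hdm' hm1 (hm'.trans hm2.symm)
    rw [hm3] at this
    rw [coeff_mul_X_pow'] at this
    rw [if_pos (by omega)] at this
    have hjj : n - 1 - (n - 1 - j) = j := by omega
    rwa [hjj] at this
  have hr0 : r = 0 := by
    ext i
    rcases lt_or_ge i n with hi | hi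
    · simpa using hcoeff i hi
    · simp only [coeff_zero]
      exact coeff_eq_zero_of_degree_lt (lt_of_lt_of_le hrdeg (by exact_mod_cast hi))
  rw [← hr, hr0]
  unfold toAmb
  rw [map_zero]

/-- Step 1: the dual code of an ideal `C` is the annihilator of `ρ(C)`. -/
lemma dualCode_eq_ann [Nontrivial S] (hn : 0 < n) (C : Ideal (Amb S n)) :
    dualCode S n ↑C = {w | ∀ c ∈ C, w * rho S n c = 0} := by
  ext w
  constructor
  · intro hw c hc
    obtain ⟨wp, hwpdeg, hwp⟩ := exists_rep hn w
    set v : Amb S n := x ^ (n - 1) * (w * rho S n c) with hv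
    have hvz : v = 0 := by
      apply eq_zero_of_coeffs hn
      intro k
      obtain ⟨cp, hcpdeg, hcp⟩ := exists_rep hn (x ^ k * c)
      refine ⟨wp * reflect (n - 1) cp, ?_, ?_, ?_⟩
      · refine le_trans natDegree_mul_le ?_
        have h1 : (reflect (n - 1) cp).natDegree ≤ n - 1 := by
          refine natDegree_le_iff_coeff_eq_zero.mpr fun N hN => ?_
          rw [coeff_reflect]
          have : n - 1 < N := hN
          rw [revAt_eq_self_of_lt (by omega)]
          exact coeff_eq_zero_of_natDegree_lt (lt_of_le_of_lt (ndeg_le hcpdeg) hN)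
        have h2 := ndeg_le hwpdeg
        omega
      · unfold toAmb
        rw [map_mul]
        have h3 : (AdjoinRoot.mk _) (reflect (n - 1) cp) = x ^ (n - 1) * rho S n (toAmb S n cp) :=
          toAmb_reflect hn (ndeg_le hcpdeg)
        rw [h3, hcp]
        show toAmb S n wp * _ = _
        rw [hwp, map_mul, map_pow, rho_root, ← pow_mul, hv]
        ring
      · rw [← dot_eq_coeff hn]
        exact hw wp hwpdeg hwp cp hcpdeg (by rw [hcp]; exact Ideal.mul_mem_left _ _ hc)
    have : w * rho S n c = x * v := by
      rw [hv, ← mul_assoc, ← pow_succ']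
      have hs : n - 1 + 1 = n := by omega
      rw [hs, root_pow_n, one_mul]
    rw [this, hvz, mul_zero]
  · intro hw wp hwpdeg hwp cp hcpdeg hcp
    rw [dot_eq_coeff hn]
    apply coeff_nsub1_eq_zero hn
    · refine le_trans natDegree_mul_le ?_
      have h1 : (reflect (n - 1) cp).natDegree ≤ n - 1 := by
        refine natDegree_le_iff_coeff_eq_zero.mpr fun N hN => ?_
        rw [coeff_reflect]
        rw [revAt_eq_self_of_lt (by omega)]
        exact coeff_eq_zero_of_natDegree_lt (lt_of_le_of_lt (ndeg_le hcpdeg) hN)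
      have h2 := ndeg_le hwpdeg
      omega
    · unfold toAmb
      rw [map_mul]
      have h3 : (AdjoinRoot.mk _) (reflect (n - 1) cp) = x ^ (n - 1) * rho S n (toAmb S n cp) :=
        toAmb_reflect hn (ndeg_le hcpdeg)
      rw [h3]
      show toAmb S n wp * _ = 0
      rw [hwp, mul_left_comm, hw _ hcp, mul_zero]

end
end Stmt13Aux
namespace Stmt13Aux
open Polynomial AdjoinRoot TrivSqZeroExt
open scoped DualNumber
noncomputable section

variable {S : Type} [CommRing S] {n : ℕ}

lemma toAmb_add (p q : S[X]) : toAmb S n (p + q) = toAmb S n p + toAmb S n q :=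
  map_add (AdjoinRoot.mk _) p q

lemma toAmb_mul (p q : S[X]) : toAmb S n (p * q) = toAmb S n p * toAmb S n q :=
  map_mul (AdjoinRoot.mk _) p q

variable {F : Type} [Field F]

local notation "ψ" => (algebraMap F (DualNumber F))
local notation "R'" => DualNumber F

lemma emb_mk (f : F[X]) :
    emb F n (toAmb F n f)
      = eval₂ ((AdjoinRoot.of _).comp ψ) (AdjoinRoot.root _) f := by
  unfold emb liftAmb toAmb
  exact AdjoinRoot.lift_mk _ _

lemma emb_of (s : F) :
    emb F n (AdjoinRoot.of _ s) = AdjoinRoot.of _ (ψ s) := by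
  unfold emb liftAmb
  exact AdjoinRoot.lift_of _

lemma emb_root :
    emb F n (AdjoinRoot.root (X ^ n - 1 : F[X]))
      = AdjoinRoot.root (X ^ n - 1 : (DualNumber F)[X]) := by
  unfold emb liftAmb
  exact AdjoinRoot.lift_root _

lemma emb_toAmb (f : F[X]) :
    emb F n (toAmb F n f) = toAmb (DualNumber F) n (f.map ψ) := by
  have h2 : toAmb (DualNumber F) n (f.map ψ)
      = eval₂ (AdjoinRoot.of _) (AdjoinRoot.root _) (f.map ψ) := by
    rw [toAmb, ← AdjoinRoot.aeval_eq, aeval_def, AdjoinRoot.algebraMap_eq]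
  rw [emb_mk, h2, eval₂_map]

lemma rho_emb (z : Amb F n) :
    rho (DualNumber F) n (emb F n z) = emb F n (rho F n z) := by
  obtain ⟨f, rfl⟩ := AdjoinRoot.mk_surjective z
  show rho (DualNumber F) n (emb F n (toAmb F n f)) = emb F n (rho F n (toAmb F n f))
  have hL : rho (DualNumber F) n (emb F n (toAmb F n f))
      = eval₂ ((rho (DualNumber F) n).comp ((AdjoinRoot.of _).comp ψ))
          (rho (DualNumber F) n (AdjoinRoot.root _)) f := by
    rw [emb_mk, hom_eval₂]
  have hR : emb F n (rho F n (toAmb F n f))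
      = eval₂ ((emb F n).comp (AdjoinRoot.of _))
          (emb F n (AdjoinRoot.root (X ^ n - 1 : F[X]) ^ (n - 1))) f := by
    rw [rho_mk, hom_eval₂]
  rw [hL, hR]
  have hhom : (rho (DualNumber F) n).comp ((AdjoinRoot.of _).comp ψ)
      = (emb F n).comp (AdjoinRoot.of _) := by
    ext s
    show rho (DualNumber F) n (AdjoinRoot.of _ (ψ s)) = emb F n (AdjoinRoot.of _ s)
    rw [rho_of, emb_of]
  rw [hhom, rho_root, map_pow, emb_root]

lemma uE_eq : uE F n = toAmb (DualNumber F) n (C ε) := (AdjoinRoot.mk_C _).symm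

lemma uE_sq : uE F n * uE F n = 0 := by
  show AdjoinRoot.of _ (ε : DualNumber F) * AdjoinRoot.of _ (ε : DualNumber F) = 0
  rw [← map_mul, DualNumber.eps_mul_eps, map_zero]

lemma fst_comp_psi : (TrivSqZeroExt.fstHom F F F).toRingHom.comp ψ = RingHom.id F := by
  ext s
  show TrivSqZeroExt.fst (ψ s) = s
  rfl

lemma psi_inl (c : F) : ψ c = TrivSqZeroExt.inl c := rfl

lemma inl_mul_eps (c : F) : TrivSqZeroExt.inl c * (ε : DualNumber F) = TrivSqZeroExt.inr c := by
  show TrivSqZeroExt.inl c * TrivSqZeroExt.inr (1 : F) = _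
  rw [TrivSqZeroExt.inl_mul_inr, smul_eq_mul, mul_one]

lemma dual_coeff_decomp (z : DualNumber F) : z = ψ z.fst + ψ z.snd * ε := by
  rw [psi_inl, psi_inl, inl_mul_eps, TrivSqZeroExt.inl_fst_add_inr_snd_eq]

lemma poly_decomp (p : (DualNumber F)[X]) :
    ∃ p1 : F[X],
      p = (p.map (TrivSqZeroExt.fstHom F F F).toRingHom).map ψ + (p1.map ψ) * C ε := by
  refine ⟨(⟨.ofCoeff (Finsupp.mapRange TrivSqZeroExt.snd TrivSqZeroExt.snd_zero p.toFinsupp.coeff)⟩ : F[X]), ?_⟩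
  apply Polynomial.ext
  intro i
  rw [coeff_add, coeff_mul_C, coeff_map, coeff_map, Polynomial.coeff_map ψ i]
  exact dual_coeff_decomp (p.coeff i)

lemma map_psi_xn : (X ^ n - 1 : F[X]).map ψ = (X ^ n - 1 : (DualNumber F)[X]) := by
  rw [Polynomial.map_sub, Polynomial.map_pow, map_X, Polynomial.map_one]

lemma map_fst_psi (q : F[X]) :
    (q.map ψ).map (TrivSqZeroExt.fstHom F F F).toRingHom = q := by
  rw [Polynomial.map_map, fst_comp_psi, Polynomial.map_id]

lemma toAmb_map_eq_zero {q : F[X]} :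
    toAmb (DualNumber F) n (q.map ψ) = 0 ↔ toAmb F n q = 0 := by
  rw [toAmb_eq_zero, toAmb_eq_zero]
  constructor
  · rintro ⟨m, hm⟩
    refine ⟨m.map (TrivSqZeroExt.fstHom F F F).toRingHom, ?_⟩
    have := congrArg (Polynomial.map (TrivSqZeroExt.fstHom F F F).toRingHom) hm
    rwa [map_fst_psi, Polynomial.map_mul, ← map_psi_xn, map_fst_psi] at this
  · rintro ⟨m, hm⟩
    exact ⟨m.map ψ, by rw [hm, Polynomial.map_mul, map_psi_xn]⟩

lemma eps_poly_cancel {γ : F[X]} (h : (γ.map ψ) * C ε = 0) : γ = 0 := by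
  ext i
  have h1 := congrArg (fun q => Polynomial.coeff q i) h
  simp only [coeff_mul_C, coeff_map, coeff_zero] at h1
  rw [psi_inl, inl_mul_eps] at h1
  simpa using congrArg TrivSqZeroExt.snd h1

/-- Claim U: extraction of the two components from a vanishing combination. -/
lemma extract {α β : F[X]}
    (h : toAmb (DualNumber F) n (α.map ψ) + uE F n * toAmb (DualNumber F) n (β.map ψ) = 0) :
    toAmb F n α = 0 ∧ toAmb F n β = 0 := by
  have h0 : toAmb (DualNumber F) n (α.map ψ + (β.map ψ) * C ε) = 0 := by
    rw [toAmb_add, toAmb_mul, ← uE_eq]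
    linear_combination h
  obtain ⟨m, hm⟩ := toAmb_eq_zero.mp h0
  set m0 : F[X] := m.map (TrivSqZeroExt.fstHom F F F).toRingHom with hm0
  have hfst : α = (X ^ n - 1) * m0 := by
    have h2 := congrArg (Polynomial.map (TrivSqZeroExt.fstHom F F F).toRingHom) hm
    rw [Polynomial.map_add, map_fst_psi, Polynomial.map_mul, Polynomial.map_mul, map_fst_psi,
      map_C] at h2
    have he : ((TrivSqZeroExt.fstHom F F F).toRingHom) (ε : DualNumber F) = (0 : F) := rfl
    rwa [he, C_0, mul_zero, add_zero, ← map_psi_xn, map_fst_psi] at h2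
  refine ⟨toAmb_eq_zero.mpr ⟨m0, hfst⟩, ?_⟩
  obtain ⟨m1, hm1⟩ := poly_decomp m
  rw [hfst, hm1, Polynomial.map_mul, map_psi_xn, ← hm0, mul_add, ← mul_assoc] at hm
  have hcancel := add_left_cancel hm
  rw [← map_psi_xn, ← Polynomial.map_mul] at hcancel
  have hγ : ((β - (X ^ n - 1) * m1).map ψ) * C ε = 0 := by
    rw [Polynomial.map_sub, sub_mul, hcancel, sub_self]
  exact toAmb_eq_zero.mpr ⟨m1, sub_eq_zero.mp (eps_poly_cancel hγ)⟩

end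
end Stmt13Aux
namespace Stmt13Aux
open Polynomial AdjoinRoot TrivSqZeroExt
open scoped DualNumber
noncomputable section

variable {S : Type} [CommRing S] {n : ℕ}

lemma toAmb_zero : toAmb S n (0 : S[X]) = 0 := map_zero (AdjoinRoot.mk _)

lemma toAmb_xn : toAmb S n (X ^ n - 1) = 0 := AdjoinRoot.mk_self

variable {F : Type} [Field F]

local notation "ψ" => (algebraMap F (DualNumber F))
local notation "R'" => DualNumber F

lemma E_xn : emb F n (toAmb F n (X ^ n - 1)) = 0 := by rw [toAmb_xn, map_zero]

lemma step3 (hn : 0 < n) {g' a' hA hG : F[X]} (h1 : a' * hA = X ^ n - 1)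
    (h2 : g' * hG = X ^ n - 1) (hd : a' ∣ g') :
    {w : Amb (DualNumber F) n | w * emb F n (toAmb F n g') = 0 ∧
        w * (uE F n * emb F n (toAmb F n a')) = 0}
      = ↑(Ideal.span {emb F n (toAmb F n hA), uE F n * emb F n (toAmb F n hG)}) := by
  have hXn0 : (X ^ n - 1 : F[X]) ≠ 0 := (hmon hn).ne_zero
  have ha' : a' ≠ 0 := left_ne_zero_of_mul (h1 ▸ hXn0)
  have hg' : g' ≠ 0 := left_ne_zero_of_mul (h2 ▸ hXn0)
  ext w
  simp only [Set.mem_setOf_eq, SetLike.mem_coe]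
  constructor
  · rintro ⟨hwg, hwa⟩
    obtain ⟨p, hp⟩ := AdjoinRoot.mk_surjective w
    obtain ⟨p1, hp1⟩ := poly_decomp p
    set p0 : F[X] := p.map (TrivSqZeroExt.fstHom F F F).toRingHom with hp0
    have hw : w = emb F n (toAmb F n p0) + uE F n * emb F n (toAmb F n p1) := by
      rw [← hp]
      show toAmb R' n p = _
      rw [hp1, toAmb_add, toAmb_mul, ← uE_eq, ← emb_toAmb, ← emb_toAmb]
      ring
    have hA0 : toAmb F n (p0 * a') = 0 := by
      have h4 : uE F n * toAmb R' n ((p0 * a').map ψ) = 0 := by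
        rw [← emb_toAmb, ← hwa, hw, toAmb_mul, map_mul]
        linear_combination
          (- emb F n (toAmb F n p1) * emb F n (toAmb F n a')) * uE_sq (F := F) (n := n)
      have h5 : toAmb R' n ((0 : F[X]).map ψ) + uE F n * toAmb R' n ((p0 * a').map ψ) = 0 := by
        rw [Polynomial.map_zero, toAmb_zero, zero_add]
        exact h4
      exact (extract h5).2
    have hG0 : toAmb F n (p1 * g') = 0 := by
      have h5 : toAmb R' n ((p0 * g').map ψ) + uE F n * toAmb R' n ((p1 * g').map ψ) = 0 := by
        rw [← emb_toAmb, ← emb_toAmb, ← hwg, hw, toAmb_mul, map_mul, toAmb_mul, map_mul]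
        ring
      exact (extract h5).2
    obtain ⟨t, ht⟩ := toAmb_eq_zero.mp hA0
    have hp0' : p0 = hA * t := by
      apply mul_right_cancel₀ ha'
      rw [show p0 * a' = a' * p0 from mul_comm _ _] at ht
      calc p0 * a' = a' * p0 := mul_comm _ _
        _ = (X ^ n - 1) * t := ht
        _ = (a' * hA) * t := by rw [h1]
        _ = (hA * t) * a' := by ring
    obtain ⟨s, hs⟩ := toAmb_eq_zero.mp hG0
    have hp1' : p1 = hG * s := by
      apply mul_right_cancel₀ hg'
      calc p1 * g' = (X ^ n - 1) * s := hs
        _ = (g' * hG) * s := by rw [h2]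
        _ = (hG * s) * g' := by ring
    refine Ideal.mem_span_pair.mpr ⟨emb F n (toAmb F n t), emb F n (toAmb F n s), ?_⟩
    rw [hw, hp0', hp1', toAmb_mul, map_mul, toAmb_mul, map_mul]
    ring
  · intro hmem
    obtain ⟨r1, r2, hr⟩ := Ideal.mem_span_pair.mp hmem
    obtain ⟨b, hb⟩ := hd
    have key1 : emb F n (toAmb F n hA) * emb F n (toAmb F n g') = 0 := by
      rw [← map_mul (emb F n), ← toAmb_mul,
        show hA * g' = (X ^ n - 1) * b by rw [hb, ← h1]; ring,
        toAmb_mul, map_mul, E_xn, zero_mul]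
    have key2 : emb F n (toAmb F n hG) * emb F n (toAmb F n g') = 0 := by
      rw [← map_mul (emb F n), ← toAmb_mul,
        show hG * g' = g' * hG from mul_comm _ _, h2, E_xn]
    have key3 : emb F n (toAmb F n hA) * emb F n (toAmb F n a') = 0 := by
      rw [← map_mul (emb F n), ← toAmb_mul,
        show hA * a' = a' * hA from mul_comm _ _, h1, E_xn]
    constructor
    · rw [← hr]
      linear_combination r1 * key1 + (r2 * uE F n) * key2
    · rw [← hr]
      linear_combination (r1 * uE F n) * key3
        + (r2 * (emb F n (toAmb F n hG) * emb F n (toAmb F n a'))) * uE_sq (F := F) (n := n)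

end
end Stmt13Aux
namespace Stmt13Aux
open Polynomial AdjoinRoot TrivSqZeroExt
open scoped DualNumber
noncomputable section

variable {n : ℕ} {F : Type} [Field F]

local notation "R'" => DualNumber F

lemma ann_pair (s t : Amb (DualNumber F) n) :
    {w | ∀ c ∈ Ideal.span {s, t}, w * rho (DualNumber F) n c = 0}
      = {w | w * rho (DualNumber F) n s = 0 ∧ w * rho (DualNumber F) n t = 0} := by
  ext w
  simp only [Set.mem_setOf_eq]
  constructor
  · intro h
    exact ⟨h s (Ideal.subset_span (Set.mem_insert _ _)),
      h t (Ideal.subset_span (Set.mem_insert_of_mem _ rfl))⟩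
  · rintro ⟨h1, h2⟩ c hc
    obtain ⟨u, v, huv⟩ := Ideal.mem_span_pair.mp hc
    rw [← huv, map_add, map_mul, map_mul]
    linear_combination (rho (DualNumber F) n u) * h1 + (rho (DualNumber F) n v) * h2

lemma cond_rev (hn : 0 < n) (f : F[X]) (u w : Amb (DualNumber F) n) :
    w * (u * rho (DualNumber F) n (emb F n (toAmb F n f))) = 0 ↔
      w * (u * emb F n (toAmb F n f.reverse)) = 0 := by
  have hrev : (AdjoinRoot.root (X ^ n - 1 : (DualNumber F)[X])) ^ f.natDegree
      * rho (DualNumber F) n (emb F n (toAmb F n f)) = emb F n (toAmb F n f.reverse) := by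
    rw [rho_emb, ← emb_root, ← map_pow, ← map_mul, toAmb_reverse hn]
  constructor
  · intro h
    rw [← hrev]
    linear_combination (AdjoinRoot.root (X ^ n - 1 : (DualNumber F)[X]) ^ f.natDegree) * h
  · intro h
    have h2 : (AdjoinRoot.root (X ^ n - 1 : (DualNumber F)[X])) ^ ((n - 1) * f.natDegree)
        * ((AdjoinRoot.root (X ^ n - 1 : (DualNumber F)[X])) ^ f.natDegree
          * rho (DualNumber F) n (emb F n (toAmb F n f)))
        = rho (DualNumber F) n (emb F n (toAmb F n f)) := by
      rw [← mul_assoc, ← pow_add]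
      have hh : (n - 1) * f.natDegree = n * f.natDegree - f.natDegree :=
        Nat.sub_one_mul _ _
      have h3 : f.natDegree ≤ n * f.natDegree := Nat.le_mul_of_pos_left _ hn
      have h4 : (n - 1) * f.natDegree + f.natDegree = n * f.natDegree + 0 := by omega
      rw [h4, pow_reduce, pow_zero, one_mul]
    rw [← h2, hrev]
    linear_combination
      (AdjoinRoot.root (X ^ n - 1 : (DualNumber F)[X]) ^ ((n - 1) * f.natDegree)) * h

lemma rho_uE : rho (DualNumber F) n (uE F n) = uE F n := rho_of _

lemma revXn (hn : 0 < n) : (X ^ n - 1 : (ZMod 2)[X]).reverse = X ^ n - 1 := by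
  have hneg : (-1 : (ZMod 2)[X]) = 1 := by
    rw [← C_1, ← C_neg]
    congr 1
  have hsub : (X ^ n - 1 : (ZMod 2)[X]) = X ^ n + 1 := by
    rw [sub_eq_add_neg, hneg]
  rw [hsub, Polynomial.reverse]
  have hnd : (X ^ n + 1 : (ZMod 2)[X]).natDegree = n := by
    simpa using natDegree_X_pow_add_C (n := n) (r := (1 : ZMod 2))
  rw [hnd, reflect_add, reflect_monomial, reflect_one, revAt_le (le_refl n),
    Nat.sub_self, pow_zero]
  ring

end
end Stmt13Aux

/-- for odd `n` and `C = ⟨g(x), u·a(x)⟩` over `Z_2 + uZ_2`,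
`C⊥ = ⟨((x^n-1)/a(x))*, u·((x^n-1)/g(x))*⟩`. -/
theorem stmt13 {n : ℕ} (hn : 0 < n) (hodd : Odd n)
    (g a : (ZMod 2)[X]) (hag : a ∣ g) (hgdvd : g ∣ X ^ n - 1) :
    dualCode (DualNumber (ZMod 2)) n
      ↑(Ideal.span {emb (ZMod 2) n (toAmb (ZMod 2) n g),
        uE (ZMod 2) n * emb (ZMod 2) n (toAmb (ZMod 2) n a)})
    = ↑(Ideal.span {emb (ZMod 2) n (toAmb (ZMod 2) n ((X ^ n - 1) / a).reverse),
        uE (ZMod 2) n * emb (ZMod 2) n (toAmb (ZMod 2) n ((X ^ n - 1) / g).reverse)}) := by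
  classical
  have hXn0 : (X ^ n - 1 : (ZMod 2)[X]) ≠ 0 := (Stmt13Aux.hmon hn).ne_zero
  have hadvd : a ∣ X ^ n - 1 := hag.trans hgdvd
  have ha0 : a ≠ 0 := by rintro rfl; exact hXn0 (zero_dvd_iff.mp hadvd)
  have hg0 : g ≠ 0 := by rintro rfl; exact hXn0 (zero_dvd_iff.mp hgdvd)
  have hdiva : a * ((X ^ n - 1) / a) = X ^ n - 1 := EuclideanDomain.mul_div_cancel' ha0 hadvd
  have hdivg : g * ((X ^ n - 1) / g) = X ^ n - 1 := EuclideanDomain.mul_div_cancel' hg0 hgdvd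
  have h1 : a.reverse * ((X ^ n - 1) / a).reverse = X ^ n - 1 := by
    rw [← Polynomial.reverse_mul_of_domain, hdiva, Stmt13Aux.revXn hn]
  have h2 : g.reverse * ((X ^ n - 1) / g).reverse = X ^ n - 1 := by
    rw [← Polynomial.reverse_mul_of_domain, hdivg, Stmt13Aux.revXn hn]
  have hd : a.reverse ∣ g.reverse := by
    obtain ⟨c, hc⟩ := hag
    exact ⟨c.reverse, by rw [hc, Polynomial.reverse_mul_of_domain]⟩
  rw [Stmt13Aux.dualCode_eq_ann hn, Stmt13Aux.ann_pair]
  have hmid : {w : Amb (DualNumber (ZMod 2)) n |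
        w * Stmt13Aux.rho (DualNumber (ZMod 2)) n (emb (ZMod 2) n (toAmb (ZMod 2) n g)) = 0 ∧
        w * Stmt13Aux.rho (DualNumber (ZMod 2)) n
            (uE (ZMod 2) n * emb (ZMod 2) n (toAmb (ZMod 2) n a)) = 0}
      = {w : Amb (DualNumber (ZMod 2)) n |
          w * emb (ZMod 2) n (toAmb (ZMod 2) n g.reverse) = 0 ∧
          w * (uE (ZMod 2) n * emb (ZMod 2) n (toAmb (ZMod 2) n a.reverse)) = 0} := by
    ext w
    simp only [Set.mem_setOf_eq, map_mul, Stmt13Aux.rho_uE]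
    constructor
    · rintro ⟨c1, c2⟩
      refine ⟨?_, (Stmt13Aux.cond_rev hn a (uE (ZMod 2) n) w).mp c2⟩
      have := (Stmt13Aux.cond_rev hn g 1 w).mp (by rw [one_mul]; exact c1)
      rwa [one_mul] at this
    · rintro ⟨c1, c2⟩
      refine ⟨?_, (Stmt13Aux.cond_rev hn a (uE (ZMod 2) n) w).mpr c2⟩
      have := (Stmt13Aux.cond_rev hn g 1 w).mpr (by rw [one_mul]; exact c1)
      rwa [one_mul] at this
  rw [hmid, Stmt13Aux.step3 hn h1 h2 hd]
end

section
/- Let C = ⟨g(x) + u·p(x), u·a(x)⟩ be a cyclic code of length n over R = F_q + uF_q, where a(x), g(x), p(x) ∈ F_q[x], g(x) and a(x) are monic, a(x) | g(x) | (x^n − 1), a(x) | p(x)·((x^n − 1)/g(x)), and deg p(x) < deg a(x). Then C_u := {b(x) ∈ F_q[x]/⟨x^n − 1⟩ : u·b(x) ∈ C} = ⟨a(x)⟩, the ideal of F_q[x]/⟨x^n − 1⟩ generated by a(x). -/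
set_option synthInstance.maxHeartbeats 1000000
set_option maxHeartbeats 2000000


open Polynomial

noncomputable section Stmt16auxSec

namespace Stmt16aux

variable {F : Type} [Field F] {n : ℕ}

def ι (F : Type) [Field F] : F[X] →+* (DualNumber F)[X] :=
  Polynomial.mapRingHom (algebraMap F (DualNumber F))

def φ (F : Type) [Field F] : (DualNumber F)[X] →+* F[X] :=
  Polynomial.mapRingHom (TrivSqZeroExt.fstHom F F F).toRingHom

lemma phi_iota (f : F[X]) : φ F (ι F f) = f := by
  simp only [φ, ι, coe_mapRingHom, Polynomial.map_map]
  have : (TrivSqZeroExt.fstHom F F F).toRingHom.comp (algebraMap F (DualNumber F))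
      = RingHom.id F := by
    ext x
    simp [TrivSqZeroExt.algebraMap_eq_inl']
  rw [this, Polynomial.map_id]

lemma exists_decomp (f : (DualNumber F)[X]) :
    ∃ f₀ f₁ : F[X], f = ι F f₀ + C DualNumber.eps * ι F f₁ := by
  induction f using Polynomial.induction_on' with
  | add p q hp hq =>
    obtain ⟨p₀, p₁, rfl⟩ := hp
    obtain ⟨q₀, q₁, rfl⟩ := hq
    exact ⟨p₀ + q₀, p₁ + q₁, by push_cast [map_add]; ring⟩
  | monomial i z =>
    refine ⟨C z.fst * X ^ i, C z.snd * X ^ i, ?_⟩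
    have hz : z = algebraMap F (DualNumber F) z.fst
        + DualNumber.eps * algebraMap F (DualNumber F) z.snd := by
      ext <;> simp [TrivSqZeroExt.algebraMap_eq_inl']
    rw [← C_mul_X_pow_eq_monomial]
    simp only [ι, coe_mapRingHom, Polynomial.map_mul, Polynomial.map_pow, map_C, map_X]
    conv_lhs => rw [hz]
    rw [map_add, map_mul]
    ring

lemma eps_smul_eq_zero {B : F[X]} (h : C DualNumber.eps * ι F B = 0) : B = 0 := by
  ext i
  have := congrArg (fun (q : (DualNumber F)[X]) => (q.coeff i).snd) h
  simpa [ι, coeff_C_mul, DualNumber.snd_mul, TrivSqZeroExt.algebraMap_eq_inl'] using this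

lemma decomp_eq_zero {A B : F[X]}
    (h : ι F A + C DualNumber.eps * ι F B = 0) : A = 0 ∧ B = 0 := by
  have hA : A = 0 := by
    have h2 : φ F (ι F A) + φ F (C DualNumber.eps * ι F B) = 0 := by
      rw [← map_add, h, map_zero]
    have h3 : φ F (C DualNumber.eps) = 0 := by
      simp [φ, map_C]
    rw [map_mul, h3, zero_mul, add_zero, phi_iota] at h2
    exact h2
  refine ⟨hA, eps_smul_eq_zero ?_⟩
  rwa [hA, map_zero, zero_add] at h

lemma iotaX : ι F (X : F[X]) = X := by simp [ι]

lemma liftAmb_mk {S T : Type} [CommRing S] [CommRing T] (n : ℕ) (ψ : S →+* T) (f : S[X]) :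
    liftAmb n ψ (AdjoinRoot.mk _ f) = AdjoinRoot.mk _ (f.map ψ) := by
  rw [liftAmb, AdjoinRoot.lift_mk, ← AdjoinRoot.aeval_eq, aeval_def, eval₂_map,
    AdjoinRoot.algebraMap_eq]

end Stmt16aux

end Stmt16auxSec

/-- for `C = ⟨g(x) + u·p(x), u·a(x)⟩`, the torsion code
`C_u = {b : u·b ∈ C}` equals `⟨a(x)⟩`. -/
theorem stmt16 {F : Type} [Field F] [Fintype F] {n : ℕ} (hn : 0 < n)
    (g a p : F[X]) (hgm : g.Monic) (ham : a.Monic)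
    (hag : a ∣ g) (hgdvd : g ∣ X ^ n - 1)
    (hap : a ∣ p * ((X ^ n - 1) / g))
    (hpdeg : p.degree < a.degree) :
    Tor F n (Ideal.span {emb F n (toAmb F n g) + uE F n * emb F n (toAmb F n p),
        uE F n * emb F n (toAmb F n a)})
      = ↑(Ideal.span {toAmb F n a}) := by
  have hemb : ∀ f : F[X], emb F n (toAmb F n f)
      = AdjoinRoot.mk (X ^ n - 1 : (DualNumber F)[X]) (Stmt16aux.ι F f) := fun f =>
    Stmt16aux.liftAmb_mk n _ f
  have huE : uE F n = AdjoinRoot.mk (X ^ n - 1 : (DualNumber F)[X]) (C DualNumber.eps) := by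
    rw [AdjoinRoot.mk_C]; rfl
  have hq : g * ((X ^ n - 1 : F[X]) / g) = X ^ n - 1 :=
    EuclideanDomain.mul_div_cancel' hgm.ne_zero hgdvd
  ext z
  obtain ⟨b, rfl⟩ := AdjoinRoot.mk_surjective z
  simp only [Tor, Set.mem_setOf_eq, SetLike.mem_coe]
  constructor
  · intro hz
    rw [Ideal.mem_span_pair] at hz
    obtain ⟨α, β, hab⟩ := hz
    obtain ⟨c, rfl⟩ := AdjoinRoot.mk_surjective α
    obtain ⟨d, rfl⟩ := AdjoinRoot.mk_surjective β
    have hb : emb F n (AdjoinRoot.mk (X ^ n - 1 : F[X]) b)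
        = AdjoinRoot.mk (X ^ n - 1 : (DualNumber F)[X]) (Stmt16aux.ι F b) :=
      Stmt16aux.liftAmb_mk n _ b
    rw [hemb, hemb, hemb, hb, huE] at hab
    simp only [← map_mul, ← map_add] at hab
    rw [AdjoinRoot.mk_eq_mk] at hab
    obtain ⟨e, he⟩ := hab
    obtain ⟨c₀, c₁, rfl⟩ := Stmt16aux.exists_decomp c
    obtain ⟨d₀, d₁, rfl⟩ := Stmt16aux.exists_decomp d
    obtain ⟨e₀, e₁, rfl⟩ := Stmt16aux.exists_decomp e
    have hE : (C DualNumber.eps : (DualNumber F)[X]) * C DualNumber.eps = 0 := by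
      rw [← map_mul, DualNumber.eps_mul_eps, map_zero]
    have key : Stmt16aux.ι F (c₀ * g - (X ^ n - 1) * e₀)
        + C DualNumber.eps
          * Stmt16aux.ι F (c₀ * p + c₁ * g + d₀ * a - b - (X ^ n - 1) * e₁) = 0 := by
      simp only [map_sub, map_add, map_mul, map_pow, map_one, Stmt16aux.iotaX]
      linear_combination he
        - (Stmt16aux.ι F c₁ * Stmt16aux.ι F p + Stmt16aux.ι F d₁ * Stmt16aux.ι F a) * hE
    obtain ⟨h1, h2⟩ := Stmt16aux.decomp_eq_zero key
    have hc₀ : c₀ = (X ^ n - 1 : F[X]) / g * e₀ := by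
      apply mul_right_cancel₀ hgm.ne_zero
      linear_combination h1 - e₀ * hq
    rw [hc₀] at h2
    have hbb : b = e₀ * (p * ((X ^ n - 1 : F[X]) / g)) + c₁ * g + d₀ * a
        - (X ^ n - 1) * e₁ := by
      linear_combination -h2
    have hadvd : a ∣ b := by
      rw [hbb]
      exact dvd_sub
        (dvd_add (dvd_add (hap.mul_left e₀) (hag.mul_left c₁)) (dvd_mul_left a d₀))
        (((hag.trans hgdvd)).mul_right e₁)
    exact Ideal.mem_span_singleton.mpr (map_dvd (AdjoinRoot.mk _) hadvd)
  · intro hz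
    obtain ⟨r, hr⟩ := Ideal.mem_span_singleton.mp hz
    rw [show AdjoinRoot.mk (X ^ n - 1 : F[X]) b = toAmb F n a * r from hr, map_mul]
    have : uE F n * (emb F n (toAmb F n a) * emb F n r)
        = emb F n r * (uE F n * emb F n (toAmb F n a)) := by ring
    rw [this]
    exact Ideal.mul_mem_left _ _ (Ideal.subset_span (by simp))
end
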